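/- A linear operator φ on R^n that preserves majorization for probability distributions (a ⪯ b implies φ(a) ⪯ φ(b) whenever a, b are nonnegative with entries summing to 1) also preserves majorization for (0,1)-vectors, i.e., a ⪯ b implies φ(a) ⪯ φ(b) for all a, b ∈ {0,1}^n. -/

import Mathlib

open Matrix

/-- `P` is a permutation matrix. -/
def IsPermMatrix {n : ℕ} (P : Matrix (Fin n) (Fin n) ℝ) : Prop :=
  ∃ σ : Equiv.Perm (Fin n), P = σ.permMatrix ℝ

/-- Vector majorization: `a = D b` for some doubly stochastic `D`. -/
def VecMaj {n : ℕ} (a b : Fin n → ℝ) : Prop :=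
  ∃ D ∈ doublyStochastic ℝ (Fin n), a = D.mulVec b

/-- Strong majorization of matrices: `A = D B` for some doubly stochastic `D`. -/
def StrongMaj {n m : ℕ} (A B : Matrix (Fin n) (Fin m) ℝ) : Prop :=
  ∃ D ∈ doublyStochastic ℝ (Fin n), A = D * B

/-- `a` is a permutation of `b`. -/
def PermOf {n : ℕ} (a b : Fin n → ℝ) : Prop :=
  ∃ σ : Equiv.Perm (Fin n), ∀ i, a i = b (σ i)

theorem stmt7 {n : ℕ} (φ : (Fin n → ℝ) →ₗ[ℝ] (Fin n → ℝ))
    (h : ∀ a b : Fin n → ℝ, (∀ i, 0 ≤ a i) → ∑ i, a i = 1 →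
      (∀ i, 0 ≤ b i) → ∑ i, b i = 1 → VecMaj a b → VecMaj (φ a) (φ b)) :
    ∀ a b : Fin n → ℝ, (∀ i, a i = 0 ∨ a i = 1) → (∀ i, b i = 0 ∨ b i = 1) →
      VecMaj a b → VecMaj (φ a) (φ b) := by
  intro a b ha hb hmaj
  obtain ⟨D, hD, hab⟩ := hmaj
  have ha0 : ∀ i, 0 ≤ a i := fun i => by rcases ha i with h' | h' <;> simp [h']
  have hb0 : ∀ i, 0 ≤ b i := fun i => by rcases hb i with h' | h' <;> simp [h']
  set k : ℝ := ∑ i, b i with hk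
  have hk0 : 0 ≤ k := Finset.sum_nonneg fun i _ => hb0 i
  have hsa : ∑ i, a i = k := by
    rw [hab]
    simp only [Matrix.mulVec, dotProduct]
    rw [Finset.sum_comm]
    simp only [← Finset.sum_mul, sum_col_of_mem_doublyStochastic hD]
    simp
    exact hk.symm
  rcases eq_or_lt_of_le hk0 with hk' | hk'
  · -- k = 0 : a = b = 0
    have hbz : b = 0 := by
      funext i
      have h1 := Finset.single_le_sum (fun j _ => hb0 j) (Finset.mem_univ i)
      have : (∑ j, b j) = 0 := hk'.symm
      have := hb0 i
      simp only [Pi.zero_apply]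
      linarith
    have haz : a = 0 := by
      rw [hab, hbz]; simp [Matrix.mulVec]
    refine ⟨1, one_mem _, ?_⟩
    rw [haz, hbz]
    simp
  · -- k > 0 : normalize
    have hka : ∑ i, k⁻¹ * a i = 1 := by
      rw [← Finset.mul_sum, hsa, inv_mul_cancel₀ hk'.ne']
    have hkb : ∑ i, k⁻¹ * b i = 1 := by
      rw [← Finset.mul_sum, inv_mul_cancel₀ hk'.ne']
    have hmaj' : VecMaj (k⁻¹ • a) (k⁻¹ • b) := by
      refine ⟨D, hD, ?_⟩
      rw [hab, Matrix.mulVec_smul]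
    obtain ⟨D', hD', h'⟩ := h (k⁻¹ • a) (k⁻¹ • b)
      (fun i => mul_nonneg (inv_nonneg.mpr hk0) (ha0 i)) hka
      (fun i => mul_nonneg (inv_nonneg.mpr hk0) (hb0 i)) hkb hmaj'
    refine ⟨D', hD', ?_⟩
    have h2 : k⁻¹ • φ a = D'.mulVec (k⁻¹ • φ b) := by
      rw [← φ.map_smul, ← φ.map_smul]; exact h'
    rw [Matrix.mulVec_smul] at h2
    have := congrArg (fun v => k • v) h2
    simpa [smul_smul, mul_inv_cancel₀ hk'.ne'] using this
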